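/- Let m > 0 and let a₁, a₂ ∈ (−∞, 4m²). For every b₂ ∈ ℝ there exist b₀, b₁ ∈ ℝ with b₀ ≠ 0 and pairwise distinct nonzero real numbers γ₀, γ₁, γ₂ ∈ (−∞, 4m²) such that for each i ∈ {0, 1, 2}: (a₁ − γᵢ)·(a₂ − γᵢ)·J(γᵢ) = b₀/γᵢ + b₁ + b₂·γᵢ. -/

import Mathlib

open MeasureTheory Set Real

/-- The spectral density `ρ(M) = (1/(16π²M))·√(1 − 4m²/M)` for `M ≥ 4m²`, and `0` otherwise. -/
noncomputable def rho (m M : ℝ) : ℝ :=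
  if 4 * m ^ 2 ≤ M then (1 / (16 * Real.pi ^ 2 * M)) * Real.sqrt (1 - 4 * m ^ 2 / M) else 0

/-- The Stieltjes transform `J(γ) = ∫_{4m²}^∞ ρ(M)/(M − γ) dM`. -/
noncomputable def Jfun (m γ : ℝ) : ℝ :=
  ∫ M in Set.Ici (4 * m ^ 2), rho m M / (M - γ)


lemma rho_nonneg (m M : ℝ) : 0 ≤ rho m M := by
  unfold rho
  split_ifs with h
  · have hM : (0:ℝ) ≤ M := le_trans (by positivity) h
    have : (0:ℝ) ≤ 1 / (16 * Real.pi ^ 2 * M) := by positivity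
    exact mul_nonneg this (Real.sqrt_nonneg _)
  · exact le_refl _

lemma rho_le_inv (m M : ℝ) (hM : 4 * m ^ 2 ≤ M) : rho m M ≤ 1 / (16 * Real.pi ^ 2 * M) := by
  unfold rho
  rw [if_pos hM]
  have hM0 : (0:ℝ) ≤ M := le_trans (by positivity) hM
  have h1 : Real.sqrt (1 - 4 * m ^ 2 / M) ≤ 1 := by
    have : 0 ≤ 4 * m ^ 2 / M := by positivity
    calc Real.sqrt (1 - 4 * m ^ 2 / M) ≤ Real.sqrt 1 := Real.sqrt_le_sqrt (by linarith)
      _ = 1 := Real.sqrt_one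
  calc (1 / (16 * Real.pi ^ 2 * M)) * Real.sqrt (1 - 4 * m ^ 2 / M)
      ≤ (1 / (16 * Real.pi ^ 2 * M)) * 1 := by
        apply mul_le_mul_of_nonneg_left h1 (by positivity)
    _ = 1 / (16 * Real.pi ^ 2 * M) := mul_one _

lemma measurable_rho (m : ℝ) : Measurable (rho m) := by
  unfold rho
  apply Measurable.ite (measurableSet_le measurable_const measurable_id)
  · exact (measurable_const.div ((measurable_const.mul measurable_id))).mul
      (Real.continuous_sqrt.measurable.comp (measurable_const.sub (measurable_const.div measurable_id)))
  · exact measurable_const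

lemma integrableOn_inv_sq (m : ℝ) (hm : 0 < m) :
    IntegrableOn (fun M : ℝ => 1 / M ^ 2) (Ici (4 * m ^ 2)) := by
  have h0 : (0:ℝ) < 4 * m ^ 2 := by positivity
  rw [integrableOn_Ici_iff_integrableOn_Ioi]
  have := integrableOn_Ioi_rpow_of_lt (show (-2:ℝ) < -1 by norm_num) h0
  apply this.congr_fun _ measurableSet_Ioi
  intro x hx
  have hx0 : (0:ℝ) < x := lt_trans h0 hx
  show x ^ (-2:ℝ) = 1 / x ^ 2
  rw [Real.rpow_neg hx0.le, show (2:ℝ) = ((2:ℕ):ℝ) by norm_num, Real.rpow_natCast]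
  simp [one_div]

lemma kM_le (m : ℝ) (hm : 0 < m) {γ M : ℝ} (hγ : γ < 4 * m ^ 2) (hM : 4 * m ^ 2 ≤ M) :
    (4 * m ^ 2 - γ) / (4 * m ^ 2 + |γ|) * M ≤ M - γ := by
  have hd : (0:ℝ) < 4 * m ^ 2 + |γ| := by positivity
  rw [div_mul_eq_mul_div, div_le_iff₀ hd]
  rcases abs_cases γ with ⟨h1, h2⟩ | ⟨h1, h2⟩ <;> rw [h1] <;> nlinarith

lemma integrable_main (m : ℝ) (hm : 0 < m) {γ : ℝ} (hγ : γ < 4 * m ^ 2) :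
    IntegrableOn (fun M => rho m M / (M - γ)) (Ici (4 * m ^ 2)) := by
  set κ := (4 * m ^ 2 - γ) / (4 * m ^ 2 + |γ|) with hκdef
  have hκ : 0 < κ := by
    apply div_pos (by linarith) (by positivity)
  apply Integrable.mono' (((integrableOn_inv_sq m hm).const_mul (1 / (16 * Real.pi ^ 2 * κ))))
  · exact (((measurable_rho m).div (measurable_id.sub measurable_const))).aestronglyMeasurable
  · rw [ae_restrict_iff' measurableSet_Ici]
    filter_upwards with M hM
    have hM' : (4:ℝ) * m ^ 2 ≤ M := hM
    have hM0 : (0:ℝ) < M := lt_of_lt_of_le (by positivity) hM'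
    have hMγ : 0 < M - γ := by linarith [lt_of_lt_of_le hγ hM']
    have hk := kM_le m hm hγ hM'
    have hnn : 0 ≤ rho m M / (M - γ) := div_nonneg (rho_nonneg m M) hMγ.le
    rw [Real.norm_eq_abs, abs_of_nonneg hnn]
    have step1 : rho m M / (M - γ) ≤ (1 / (16 * Real.pi ^ 2 * M)) / (κ * M) := by
      apply div_le_div₀ (by positivity) (rho_le_inv m M hM') (by positivity) hk
    have heq : (1 / (16 * Real.pi ^ 2 * M)) / (κ * M) = 1 / (16 * Real.pi ^ 2 * κ) * (1 / M ^ 2) := by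
      have hπ : Real.pi ≠ 0 := Real.pi_ne_zero
      field_simp
    rw [heq] at step1
    exact step1

lemma integrable_pair (m : ℝ) (hm : 0 < m) {u v : ℝ} (hu : u < 4 * m ^ 2) (hv : v < 4 * m ^ 2) :
    IntegrableOn (fun M => rho m M / ((M - u) * (M - v))) (Ici (4 * m ^ 2)) := by
  apply Integrable.mono' ((integrable_main m hm hu).const_mul (1 / (4 * m ^ 2 - v)))
  · exact ((measurable_rho m).div ((measurable_id.sub measurable_const).mul
      (measurable_id.sub measurable_const))).aestronglyMeasurable
  · rw [ae_restrict_iff' measurableSet_Ici]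
    filter_upwards with M hM
    have hM' : (4:ℝ) * m ^ 2 ≤ M := hM
    have h1 : 0 < M - u := by linarith
    have h2 : 0 < M - v := by linarith
    have hρ := rho_nonneg m M
    rw [Real.norm_eq_abs, abs_of_nonneg (by positivity)]
    rw [show rho m M / ((M - u) * (M - v)) = (rho m M / (M - u)) * (1 / (M - v)) by
        rw [div_mul_eq_div_mul_one_div],
      mul_comm (1 / (4 * m ^ 2 - v))]
    apply mul_le_mul_of_nonneg_left _ (by positivity)
    apply one_div_le_one_div_of_le (by linarith) (by linarith)

lemma J_diff (m : ℝ) (hm : 0 < m) {u v : ℝ} (hu : u < 4 * m ^ 2) (hv : v < 4 * m ^ 2) :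
    Jfun m v - Jfun m u
      = (v - u) * ∫ M in Set.Ici (4 * m ^ 2), rho m M / ((M - u) * (M - v)) := by
  unfold Jfun
  rw [← MeasureTheory.integral_const_mul,
    ← MeasureTheory.integral_sub (integrable_main m hm hv) (integrable_main m hm hu)]
  apply MeasureTheory.setIntegral_congr_fun measurableSet_Ici
  intro M hM
  have hM' : (4:ℝ) * m ^ 2 ≤ M := hM
  have h1 : M - u ≠ 0 := by intro h; nlinarith
  have h2 : M - v ≠ 0 := by intro h; nlinarith
  field_simp
  ring

lemma J_mono (m : ℝ) (hm : 0 < m) {u v : ℝ} (huv : u ≤ v) (hv : v < 4 * m ^ 2) :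
    Jfun m u ≤ Jfun m v := by
  have hu : u < 4 * m ^ 2 := lt_of_le_of_lt huv hv
  have h := J_diff m hm hu hv
  have hint : 0 ≤ ∫ M in Set.Ici (4 * m ^ 2), rho m M / ((M - u) * (M - v)) := by
    apply MeasureTheory.setIntegral_nonneg measurableSet_Ici
    intro M hM
    have hM' : (4:ℝ) * m ^ 2 ≤ M := hM
    have h1 : 0 < M - u := by linarith
    have h2 : 0 < M - v := by linarith
    exact div_nonneg (rho_nonneg m M) (by positivity)
  nlinarith [h]

lemma J_nonneg (m : ℝ) (hm : 0 < m) {γ : ℝ} (hγ : γ < 4 * m ^ 2) : 0 ≤ Jfun m γ := by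
  apply MeasureTheory.setIntegral_nonneg measurableSet_Ici
  intro M hM
  have hM' : (4:ℝ) * m ^ 2 ≤ M := hM
  have h1 : 0 < M - γ := by linarith
  exact div_nonneg (rho_nonneg m M) h1.le

lemma J_lip (m : ℝ) (hm : 0 < m) {v₀ : ℝ} (hv₀ : v₀ < 4 * m ^ 2) :
    ∃ L : ℝ, 0 ≤ L ∧ ∀ x, x ≤ v₀ → ∀ y, y ≤ v₀ →
      |Jfun m x - Jfun m y| ≤ L * |x - y| := by
  set κ := (4 * m ^ 2 - v₀) / (4 * m ^ 2 + |v₀|) with hκdef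
  have hκ : 0 < κ := div_pos (by linarith) (by positivity)
  set C : ℝ := 1 / (16 * Real.pi ^ 2 * κ ^ 2) * (1 / (4 * m ^ 2)) with hCdef
  have hC : 0 < C := by positivity
  set L : ℝ := C * ∫ M in Set.Ici (4 * m ^ 2), 1 / M ^ 2 with hLdef
  have hInn : 0 ≤ ∫ M in Set.Ici (4 * m ^ 2), 1 / M ^ 2 := by
    apply MeasureTheory.setIntegral_nonneg measurableSet_Ici
    intro M hM; positivity
  have hL : 0 ≤ L := mul_nonneg hC.le hInn
  refine ⟨L, hL, ?_⟩
  intro x hx y hy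
  have hxc : x < 4 * m ^ 2 := lt_of_le_of_lt hx hv₀
  have hyc : y < 4 * m ^ 2 := lt_of_le_of_lt hy hv₀
  have hdiff := J_diff m hm hyc hxc
  have hbound : ∫ M in Set.Ici (4 * m ^ 2), rho m M / ((M - y) * (M - x)) ≤ L := by
    rw [hLdef, ← MeasureTheory.integral_const_mul]
    apply MeasureTheory.setIntegral_mono_on (integrable_pair m hm hyc hxc)
      ((integrableOn_inv_sq m hm).const_mul C) measurableSet_Ici
    intro M hM
    have hM' : (4:ℝ) * m ^ 2 ≤ M := hM
    have hM0 : (0:ℝ) < M := lt_of_lt_of_le (by positivity) hM'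
    have hkx : κ * M ≤ M - x := le_trans (kM_le m hm hv₀ hM') (by linarith)
    have hky : κ * M ≤ M - y := le_trans (kM_le m hm hv₀ hM') (by linarith)
    have hkM : 0 < κ * M := by positivity
    have step1 : rho m M / ((M - y) * (M - x)) ≤ (1 / (16 * Real.pi ^ 2 * M)) / ((κ * M) * (κ * M)) := by
      apply div_le_div₀ (by positivity) (rho_le_inv m M hM') (by positivity)
      apply mul_le_mul hky hkx hkM.le (by linarith)
    apply le_trans step1
    have heq : (1 / (16 * Real.pi ^ 2 * M)) / ((κ * M) * (κ * M))
        = (1 / (16 * Real.pi ^ 2 * κ ^ 2) * (1 / M)) * (1 / M ^ 2) := by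
      have hπ : Real.pi ≠ 0 := Real.pi_ne_zero
      field_simp
    rw [heq, hCdef]
    apply mul_le_mul_of_nonneg_right _ (by positivity)
    apply mul_le_mul_of_nonneg_left _ (by positivity)
    apply one_div_le_one_div_of_le (by positivity) hM'
  have hnn : 0 ≤ ∫ M in Set.Ici (4 * m ^ 2), rho m M / ((M - y) * (M - x)) := by
    apply MeasureTheory.setIntegral_nonneg measurableSet_Ici
    intro M hM
    have hM' : (4:ℝ) * m ^ 2 ≤ M := hM
    exact div_nonneg (rho_nonneg m M) (by nlinarith)
  calc |Jfun m x - Jfun m y|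
      = |x - y| * |∫ M in Set.Ici (4 * m ^ 2), rho m M / ((M - y) * (M - x))| := by
        rw [hdiff, abs_mul]
    _ ≤ |x - y| * L := by
        apply mul_le_mul_of_nonneg_left _ (abs_nonneg _)
        rw [abs_of_nonneg hnn]; exact hbound
    _ = L * |x - y| := mul_comm _ _

lemma J_contOn (m : ℝ) (hm : 0 < m) {v₀ : ℝ} (hv₀ : v₀ < 4 * m ^ 2) :
    ContinuousOn (Jfun m) (Iic v₀) := by
  obtain ⟨L, hL, hlip⟩ := J_lip m hm hv₀
  apply LipschitzOnWith.continuousOn (K := Real.toNNReal L)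
  apply LipschitzOnWith.of_dist_le_mul
  intro x hx y hy
  rw [Real.dist_eq, Real.dist_eq]
  calc |Jfun m x - Jfun m y| ≤ L * |x - y| := hlip x hx y hy
    _ ≤ Real.toNNReal L * |x - y| := by
        apply mul_le_mul_of_nonneg_right _ (abs_nonneg _)
        exact le_max_left _ _

lemma J_slope (m : ℝ) (hm : 0 < m) {ε : ℝ} (hε : 0 < ε) (hε2 : 2 * ε ≤ m ^ 2) :
    1 / (16 * Real.pi ^ 2 * (5 * m ^ 2) * Real.sqrt (5 * m ^ 2)) * Real.sqrt ε / 12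
      ≤ Jfun m (4 * m ^ 2 - ε) - Jfun m (4 * m ^ 2 - 2 * ε) := by
  set c₁ : ℝ := 1 / (16 * Real.pi ^ 2 * (5 * m ^ 2) * Real.sqrt (5 * m ^ 2)) with hc₁def
  have hc₁ : 0 < c₁ := by
    have : 0 < Real.sqrt (5 * m ^ 2) := Real.sqrt_pos.2 (by positivity)
    positivity
  set u : ℝ := 4 * m ^ 2 - 2 * ε with hudef
  set v : ℝ := 4 * m ^ 2 - ε with hvdef
  have hu : u < 4 * m ^ 2 := by rw [hudef]; linarith
  have hv : v < 4 * m ^ 2 := by rw [hvdef]; linarith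
  have hdiff := J_diff m hm hu hv
  have hsub : Icc (4 * m ^ 2 + ε) (4 * m ^ 2 + 2 * ε) ⊆ Ici (4 * m ^ 2) := by
    intro x hx; exact le_trans (by linarith) hx.1
  set cst : ℝ := c₁ * Real.sqrt ε / (12 * ε ^ 2) with hcstdef
  have hcst : 0 < cst := by
    have : 0 < Real.sqrt ε := Real.sqrt_pos.2 hε
    positivity
  have key : ∀ M ∈ Icc (4 * m ^ 2 + ε) (4 * m ^ 2 + 2 * ε),
      cst ≤ rho m M / ((M - u) * (M - v)) := by
    intro M hM
    obtain ⟨hM1, hM2⟩ := hM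
    have hM4 : 4 * m ^ 2 ≤ M := by linarith
    have hM0 : 0 < M := lt_of_lt_of_le (by positivity) hM4
    have hM5 : M ≤ 5 * m ^ 2 := by linarith
    have hrho : c₁ * Real.sqrt ε ≤ rho m M := by
      unfold rho
      rw [if_pos hM4]
      have h1 : ε / (5 * m ^ 2) ≤ 1 - 4 * m ^ 2 / M := by
        rw [show (1 : ℝ) - 4 * m ^ 2 / M = (M - 4 * m ^ 2) / M by field_simp]
        apply div_le_div₀ (by linarith) (by linarith) (by positivity) hM5
      have h2 : Real.sqrt (ε / (5 * m ^ 2)) ≤ Real.sqrt (1 - 4 * m ^ 2 / M) :=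
        Real.sqrt_le_sqrt h1
      have h3 : Real.sqrt (ε / (5 * m ^ 2)) = Real.sqrt ε / Real.sqrt (5 * m ^ 2) :=
        Real.sqrt_div hε.le _
      have h4 : 1 / (16 * Real.pi ^ 2 * (5 * m ^ 2)) ≤ 1 / (16 * Real.pi ^ 2 * M) :=
        one_div_le_one_div_of_le (by positivity) (by nlinarith [Real.pi_pos])
      calc c₁ * Real.sqrt ε
          = 1 / (16 * Real.pi ^ 2 * (5 * m ^ 2)) * (Real.sqrt ε / Real.sqrt (5 * m ^ 2)) := by
            rw [hc₁def]
            have hs : Real.sqrt (5 * m ^ 2) ≠ 0 := ne_of_gt (Real.sqrt_pos.2 (by positivity))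
            field_simp
            try ring
        _ ≤ 1 / (16 * Real.pi ^ 2 * M) * (Real.sqrt ε / Real.sqrt (5 * m ^ 2)) := by
            apply mul_le_mul_of_nonneg_right h4 (by positivity)
        _ ≤ 1 / (16 * Real.pi ^ 2 * M) * Real.sqrt (1 - 4 * m ^ 2 / M) := by
            apply mul_le_mul_of_nonneg_left _ (by positivity)
            rw [← h3]; exact h2
    have hMu : 0 < M - u := by rw [hudef]; linarith
    have hMv : 0 < M - v := by rw [hvdef]; linarith
    have hMu4 : M - u ≤ 4 * ε := by rw [hudef]; linarith
    have hMv3 : M - v ≤ 3 * ε := by rw [hvdef]; linarith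
    have hden : (M - u) * (M - v) ≤ 12 * ε ^ 2 := by nlinarith
    rw [hcstdef]
    apply div_le_div₀ (le_trans (by positivity) hrho) hrho (by positivity) hden
  have hlow : cst * ε ≤ ∫ M in Set.Ici (4 * m ^ 2), rho m M / ((M - u) * (M - v)) := by
    have hint : IntegrableOn (fun M => rho m M / ((M - u) * (M - v))) (Ici (4 * m ^ 2)) :=
      integrable_pair m hm hu hv
    have h1 : ∫ M in Icc (4 * m ^ 2 + ε) (4 * m ^ 2 + 2 * ε), rho m M / ((M - u) * (M - v))
        ≤ ∫ M in Set.Ici (4 * m ^ 2), rho m M / ((M - u) * (M - v)) := by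
      apply MeasureTheory.setIntegral_mono_set hint
      · rw [Filter.EventuallyLE]
        rw [ae_restrict_iff' measurableSet_Ici]
        filter_upwards with M hM
        have hM' : (4:ℝ) * m ^ 2 ≤ M := hM
        exact div_nonneg (rho_nonneg m M) (by nlinarith)
      · exact hsub.eventuallyLE
    have h2 : cst * ε ≤ ∫ M in Icc (4 * m ^ 2 + ε) (4 * m ^ 2 + 2 * ε),
        rho m M / ((M - u) * (M - v)) := by
      have h3 : ∫ M in Icc (4 * m ^ 2 + ε) (4 * m ^ 2 + 2 * ε), cst
          ≤ ∫ M in Icc (4 * m ^ 2 + ε) (4 * m ^ 2 + 2 * ε), rho m M / ((M - u) * (M - v)) := by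
        apply MeasureTheory.setIntegral_mono_on
          (integrableOn_const measure_Icc_lt_top.ne)
          (hint.mono_set hsub) measurableSet_Icc key
      have h4 : ∫ M in Icc (4 * m ^ 2 + ε) (4 * m ^ 2 + 2 * ε), (cst : ℝ) = cst * ε := by
        rw [MeasureTheory.setIntegral_const, MeasureTheory.measureReal_def, Real.volume_Icc, smul_eq_mul,
          ENNReal.toReal_ofReal (by linarith)]
        ring_nf
      rw [← h4]; exact h3
    linarith
  have hvu : v - u = ε := by rw [hudef, hvdef]; ring
  rw [hdiff, hvu]
  calc c₁ * Real.sqrt ε / 12 = (c₁ * Real.sqrt ε / (12 * ε ^ 2)) * ε * ε := by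
        field_simp
    _ ≤ (∫ M in Set.Ici (4 * m ^ 2), rho m M / ((M - u) * (M - v))) * ε := by
        apply mul_le_mul_of_nonneg_right _ hε.le
        rw [← hcstdef]; exact hlow
    _ = ε * ∫ M in Set.Ici (4 * m ^ 2), rho m M / ((M - u) * (M - v)) := mul_comm _ _

lemma rho_int_big (m : ℝ) (hm : 0 < m) (A : ℝ) :
    ∃ X : ℝ, 8 * m ^ 2 ≤ X ∧ A ≤ ∫ M in Icc (8 * m ^ 2) X, rho m M := by
  set c₂ : ℝ := Real.sqrt (1 / 2) / (16 * Real.pi ^ 2) with hc₂def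
  have hc₂ : 0 < c₂ := by
    have : 0 < Real.sqrt (1 / 2) := Real.sqrt_pos.2 (by norm_num)
    positivity
  set E : ℝ := max (A / c₂) 0 + 1 with hEdef
  have hE0 : 0 ≤ E := by positivity
  have hEA : A ≤ c₂ * E := by
    have h1 : A / c₂ ≤ E := by rw [hEdef]; nlinarith [le_max_left (A / c₂) (0:ℝ)]
    calc A = c₂ * (A / c₂) := by field_simp
      _ ≤ c₂ * E := mul_le_mul_of_nonneg_left h1 hc₂.le
  set X : ℝ := 8 * m ^ 2 * Real.exp E with hXdef
  have hm8 : (0:ℝ) < 8 * m ^ 2 := by positivity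
  have hX : 8 * m ^ 2 ≤ X := by
    rw [hXdef]
    nlinarith [Real.one_le_exp hE0]
  refine ⟨X, hX, ?_⟩
  have hlog : Real.log (X / (8 * m ^ 2)) = E := by
    rw [hXdef, mul_comm, mul_div_assoc, div_self (ne_of_gt hm8), mul_one, Real.log_exp]
  -- pointwise bound on Icc
  have key : ∀ M ∈ Icc (8 * m ^ 2) X, c₂ * (1 / M) ≤ rho m M := by
    intro M hM
    obtain ⟨hM1, hM2⟩ := hM
    have hM0 : 0 < M := lt_of_lt_of_le hm8 hM1
    have hM4 : 4 * m ^ 2 ≤ M := by linarith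
    unfold rho
    rw [if_pos hM4]
    have h1 : (1:ℝ) / 2 ≤ 1 - 4 * m ^ 2 / M := by
      have : 4 * m ^ 2 / M ≤ 1 / 2 := by
        rw [div_le_div_iff₀ hM0 (by norm_num)]; linarith
      linarith
    have h2 : Real.sqrt (1 / 2) ≤ Real.sqrt (1 - 4 * m ^ 2 / M) := Real.sqrt_le_sqrt h1
    calc c₂ * (1 / M) = 1 / (16 * Real.pi ^ 2 * M) * Real.sqrt (1 / 2) := by
          rw [hc₂def]; field_simp; try ring
      _ ≤ 1 / (16 * Real.pi ^ 2 * M) * Real.sqrt (1 - 4 * m ^ 2 / M) :=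
          mul_le_mul_of_nonneg_left h2 (by positivity)
  have hint1 : IntegrableOn (fun M : ℝ => c₂ * (1 / M)) (Icc (8 * m ^ 2) X) := by
    apply ContinuousOn.integrableOn_Icc
    apply ContinuousOn.mul continuousOn_const
    apply ContinuousOn.div continuousOn_const continuousOn_id
    intro x hx
    exact ne_of_gt (lt_of_lt_of_le hm8 hx.1)
  have hint2 : IntegrableOn (rho m) (Icc (8 * m ^ 2) X) := by
    apply Measure.integrableOn_of_bounded (measure_Icc_lt_top).ne
      (measurable_rho m).aestronglyMeasurable (M := 1 / (16 * Real.pi ^ 2 * (8 * m ^ 2)))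
    rw [ae_restrict_iff' measurableSet_Icc]
    filter_upwards with M hM
    have hM0 : 0 < M := lt_of_lt_of_le hm8 hM.1
    have hM4 : (4:ℝ) * m ^ 2 ≤ M := by linarith [hM.1]
    rw [Real.norm_eq_abs, abs_of_nonneg (rho_nonneg m M)]
    calc rho m M ≤ 1 / (16 * Real.pi ^ 2 * M) := rho_le_inv m M hM4
      _ ≤ 1 / (16 * Real.pi ^ 2 * (8 * m ^ 2)) :=
          one_div_le_one_div_of_le (by positivity) (by nlinarith [Real.pi_pos, hM.1])
  have hmono : ∫ M in Icc (8 * m ^ 2) X, c₂ * (1 / M) ≤ ∫ M in Icc (8 * m ^ 2) X, rho m M :=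
    MeasureTheory.setIntegral_mono_on hint1 hint2 measurableSet_Icc key
  have hcomp : ∫ M in Icc (8 * m ^ 2) X, c₂ * (1 / M) = c₂ * E := by
    rw [MeasureTheory.integral_Icc_eq_integral_Ioc, ← intervalIntegral.integral_of_le hX,
      intervalIntegral.integral_const_mul, integral_one_div, hlog]
    intro h
    rcases h with ⟨h1, h2⟩
    simp only [inf_le_iff, le_inf_iff] at *
    rcases h1 with h1 | h1 <;> nlinarith
  linarith [hmono, hcomp ▸ hmono, hEA]

lemma J_lower (m : ℝ) (hm : 0 < m) {A X t : ℝ} (hX : 8 * m ^ 2 ≤ X)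
    (hA : A ≤ ∫ M in Icc (8 * m ^ 2) X, rho m M) (ht : t < 0) (hA0 : 0 ≤ A) :
    A / (X - t) ≤ Jfun m t := by
  have hm8 : (0:ℝ) < 8 * m ^ 2 := by positivity
  have hXt : 0 < X - t := by nlinarith
  have hsub : Icc (8 * m ^ 2) X ⊆ Ici (4 * m ^ 2) := by
    intro x hx; have := hx.1; simp only [mem_Ici]; nlinarith
  have htc : t < 4 * m ^ 2 := by nlinarith
  have hint : IntegrableOn (fun M => rho m M / (M - t)) (Ici (4 * m ^ 2)) :=
    integrable_main m hm htc
  have hint2 : IntegrableOn (rho m) (Icc (8 * m ^ 2) X) := by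
    apply Measure.integrableOn_of_bounded (measure_Icc_lt_top).ne
      (measurable_rho m).aestronglyMeasurable (M := 1 / (16 * Real.pi ^ 2 * (8 * m ^ 2)))
    rw [ae_restrict_iff' measurableSet_Icc]
    filter_upwards with M hM
    have hM0 : 0 < M := lt_of_lt_of_le hm8 hM.1
    have hM4 : (4:ℝ) * m ^ 2 ≤ M := by nlinarith [hM.1]
    rw [Real.norm_eq_abs, abs_of_nonneg (rho_nonneg m M)]
    calc rho m M ≤ 1 / (16 * Real.pi ^ 2 * M) := rho_le_inv m M hM4
      _ ≤ 1 / (16 * Real.pi ^ 2 * (8 * m ^ 2)) :=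
          one_div_le_one_div_of_le (by positivity) (by nlinarith [Real.pi_pos, hM.1])
  have h1 : ∫ M in Icc (8 * m ^ 2) X, rho m M / (M - t)
      ≤ ∫ M in Set.Ici (4 * m ^ 2), rho m M / (M - t) := by
    apply MeasureTheory.setIntegral_mono_set hint
    · rw [Filter.EventuallyLE, ae_restrict_iff' measurableSet_Ici]
      filter_upwards with M hM
      have hM' : (4:ℝ) * m ^ 2 ≤ M := hM
      exact div_nonneg (rho_nonneg m M) (by nlinarith)
    · exact hsub.eventuallyLE
  have h2 : ∫ M in Icc (8 * m ^ 2) X, rho m M / (X - t)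
      ≤ ∫ M in Icc (8 * m ^ 2) X, rho m M / (M - t) := by
    apply MeasureTheory.setIntegral_mono_on
      (by simp only [div_eq_mul_inv]; exact hint2.mul_const (X - t)⁻¹)
      ((hint.mono_set hsub)) measurableSet_Icc
    intro M hM
    have hMt : 0 < M - t := by nlinarith [hM.1]
    exact div_le_div_of_nonneg_left (rho_nonneg m M) hMt (by linarith [hM.2])
  have h3 : ∫ M in Icc (8 * m ^ 2) X, rho m M / (X - t)
      = (∫ M in Icc (8 * m ^ 2) X, rho m M) / (X - t) := by
    rw [MeasureTheory.integral_div]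
  have h4 : A / (X - t) ≤ (∫ M in Icc (8 * m ^ 2) X, rho m M) / (X - t) :=
    div_le_div_of_nonneg_right hA hXt.le
  unfold Jfun
  linarith [h1, h2, h3 ▸ h2, h4]

lemma aux_neg (b t : ℝ) (ht : t ≤ -1) : -b * t ≤ |b| * t ^ 2 := by
  have ht2 : -t ≤ t ^ 2 := by nlinarith
  have h1 : b * (-t) ≤ |b| * (-t) := mul_le_mul_of_nonneg_right (le_abs_self b) (by linarith)
  have h2 : |b| * (-t) ≤ |b| * t ^ 2 := mul_le_mul_of_nonneg_left ht2 (abs_nonneg b)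
  linarith

lemma aux_const (b t : ℝ) (ht : t ≤ -1) : -b ≤ |b| * t ^ 2 := by
  have ht2 : (1:ℝ) ≤ t ^ 2 := by nlinarith [sq_nonneg (t + 1)]
  have h2 : |b| * 1 ≤ |b| * t ^ 2 := mul_le_mul_of_nonneg_left ht2 (abs_nonneg b)
  have h3 : -b ≤ |b| := neg_le_abs b
  linarith

set_option maxHeartbeats 1000000 in
theorem stmt_7 (m : ℝ) (hm : 0 < m) (a₁ a₂ : ℝ)
    (ha₁ : a₁ < 4 * m ^ 2) (ha₂ : a₂ < 4 * m ^ 2) :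
    ∀ b₂ : ℝ, ∃ b₀ b₁ : ℝ, b₀ ≠ 0 ∧
      ∃ γ₀ γ₁ γ₂ : ℝ,
        γ₀ ≠ γ₁ ∧ γ₀ ≠ γ₂ ∧ γ₁ ≠ γ₂ ∧
        γ₀ ≠ 0 ∧ γ₁ ≠ 0 ∧ γ₂ ≠ 0 ∧
        γ₀ < 4 * m ^ 2 ∧ γ₁ < 4 * m ^ 2 ∧ γ₂ < 4 * m ^ 2 ∧
        (a₁ - γ₀) * (a₂ - γ₀) * Jfun m γ₀ = b₀ / γ₀ + b₁ + b₂ * γ₀ ∧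
        (a₁ - γ₁) * (a₂ - γ₁) * Jfun m γ₁ = b₀ / γ₁ + b₁ + b₂ * γ₁ ∧
        (a₁ - γ₂) * (a₂ - γ₂) * Jfun m γ₂ = b₀ / γ₂ + b₁ + b₂ * γ₂ := by
  intro b₂
  have hπ : 0 < Real.pi := Real.pi_pos
  -- setup
  set w₀ : ℝ := max (max a₁ a₂) (4 * m ^ 2 - m ^ 2 / 4) with hw₀def
  have hw₀a₁ : a₁ ≤ w₀ := le_trans (le_max_left _ _) (le_max_left _ _)
  have hw₀a₂ : a₂ ≤ w₀ := le_trans (le_max_right _ _) (le_max_left _ _)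
  have hw₀m : 4 * m ^ 2 - m ^ 2 / 4 ≤ w₀ := le_max_right _ _
  have hw₀lt : w₀ < 4 * m ^ 2 := by
    apply max_lt (max_lt ha₁ ha₂) (by nlinarith)
  have hw₀pos : 0 < w₀ := lt_of_lt_of_le (by nlinarith) hw₀m
  set d : ℝ := (4 * m ^ 2 - w₀) / 2 with hddef
  have hd : 0 < d := by rw [hddef]; linarith
  set c₁ : ℝ := 1 / (16 * Real.pi ^ 2 * (5 * m ^ 2) * Real.sqrt (5 * m ^ 2)) with hc₁def
  have hc₁ : 0 < c₁ := by
    have : 0 < Real.sqrt (5 * m ^ 2) := Real.sqrt_pos.2 (by positivity)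
    positivity
  set e₃ : ℝ := (d ^ 2 * c₁ / (12 * (|b₂| + 1))) ^ 2 with he₃def
  have he₃ : 0 < e₃ := by
    have h1 : 0 < |b₂| + 1 := by positivity
    positivity
  set ε : ℝ := min ((4 * m ^ 2 - w₀) / 4) (min (m ^ 2 / 2) e₃) / 2 with hεdef
  have hε : 0 < ε := by
    apply div_pos (lt_min (by linarith) (lt_min (by positivity) he₃)) (by norm_num)
  have hεe₁ : ε < (4 * m ^ 2 - w₀) / 4 := by
    have := min_le_left ((4 * m ^ 2 - w₀) / 4) (min (m ^ 2 / 2) e₃)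
    rw [hεdef]; linarith
  have hεe₂ : ε < m ^ 2 / 2 := by
    have h1 := min_le_right ((4 * m ^ 2 - w₀) / 4) (min (m ^ 2 / 2) e₃)
    have h2 := min_le_left (m ^ 2 / 2) e₃
    rw [hεdef]; linarith
  have hεe₃ : ε < e₃ := by
    have h1 := min_le_right ((4 * m ^ 2 - w₀) / 4) (min (m ^ 2 / 2) e₃)
    have h2 := min_le_right (m ^ 2 / 2) e₃
    rw [hεdef]; linarith
  set u : ℝ := 4 * m ^ 2 - 2 * ε with hudef
  set v : ℝ := 4 * m ^ 2 - ε with hvdef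
  have huv : u < v := by rw [hudef, hvdef]; linarith
  have hvlt : v < 4 * m ^ 2 := by rw [hvdef]; linarith
  have hult : u < 4 * m ^ 2 := by linarith
  have hud : w₀ + d ≤ u := by rw [hudef, hddef]; linarith
  have hu0 : 0 < u := by linarith
  have hv0 : 0 < v := by linarith
  have hua₁ : d ≤ u - a₁ := by linarith
  have hua₂ : d ≤ u - a₂ := by linarith
  have hva₁ : d ≤ v - a₁ := by linarith
  have hva₂ : d ≤ v - a₂ := by linarith
  -- J values
  have hslope := J_slope m hm hε (by linarith)
  rw [← hudef, ← hvdef, ← hc₁def] at hslope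
  have hJu0 : 0 ≤ Jfun m u := J_nonneg m hm hult
  have hJuv : Jfun m u ≤ Jfun m v := J_mono m hm huv.le hvlt
  set Ju : ℝ := Jfun m u with hJudef
  set Jv : ℝ := Jfun m v with hJvdef
  set Su : ℝ := (a₁ - u) * (a₂ - u) * Ju - b₂ * u with hSudef
  set Sv : ℝ := (a₁ - v) * (a₂ - v) * Jv - b₂ * v with hSvdef
  -- the key strict inequality  Su < Sv
  have hsq : Real.sqrt ε * Real.sqrt ε = ε := Real.mul_self_sqrt hε.le
  have hsqpos : 0 < Real.sqrt ε := Real.sqrt_pos.2 hε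
  have hse : Real.sqrt ε < d ^ 2 * c₁ / (12 * (|b₂| + 1)) := by
    have h1 : Real.sqrt ε < Real.sqrt e₃ := Real.sqrt_lt_sqrt hε.le hεe₃
    have h2 : Real.sqrt e₃ = d ^ 2 * c₁ / (12 * (|b₂| + 1)) := by
      rw [he₃def]
      exact Real.sqrt_sq (by positivity)
    linarith
  have hSuv : Su < Sv := by
    have hPuv : (a₁ - u) * (a₂ - u) ≤ (a₁ - v) * (a₂ - v) := by
      have key : (a₁ - v) * (a₂ - v) - (a₁ - u) * (a₂ - u) = (v - u) * (u + v - a₁ - a₂) := by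
        ring
      have pos : 0 ≤ (v - u) * (u + v - a₁ - a₂) :=
        mul_nonneg (by linarith) (by linarith)
      linarith
    have hPu : d ^ 2 ≤ (a₁ - u) * (a₂ - u) := by
      have key : (a₁ - u) * (a₂ - u) = (u - a₁) * (u - a₂) := by ring
      have h : d * d ≤ (u - a₁) * (u - a₂) :=
        mul_le_mul hua₁ hua₂ hd.le (by linarith)
      rw [key, pow_two]
      exact h
    have hstep : (|b₂| + 1) * ε < d ^ 2 * (c₁ * Real.sqrt ε / 12) := by
      have h0 : (0:ℝ) < (|b₂| + 1) * Real.sqrt ε := by positivity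
      have := mul_lt_mul_of_pos_left hse h0
      calc (|b₂| + 1) * ε = (|b₂| + 1) * Real.sqrt ε * Real.sqrt ε := by rw [mul_assoc, hsq]
        _ < (|b₂| + 1) * Real.sqrt ε * (d ^ 2 * c₁ / (12 * (|b₂| + 1))) := this
        _ = d ^ 2 * (c₁ * Real.sqrt ε / 12) := by
            have hb : (|b₂| + 1) ≠ 0 := by positivity
            field_simp
    have h1 : d ^ 2 * (c₁ * Real.sqrt ε / 12) ≤ d ^ 2 * (Jv - Ju) :=
      mul_le_mul_of_nonneg_left hslope (by positivity)
    have h2 : d ^ 2 * (Jv - Ju) ≤ (a₁ - u) * (a₂ - u) * Jv - (a₁ - u) * (a₂ - u) * Ju := by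
      have h := mul_le_mul_of_nonneg_right hPu (show (0:ℝ) ≤ Jv - Ju by linarith)
      have e : (a₁ - u) * (a₂ - u) * Jv - (a₁ - u) * (a₂ - u) * Ju
          = (a₁ - u) * (a₂ - u) * (Jv - Ju) := by ring
      rw [e]; exact h
    have h3 : (a₁ - u) * (a₂ - u) * Jv ≤ (a₁ - v) * (a₂ - v) * Jv :=
      mul_le_mul_of_nonneg_right hPuv (by linarith)
    have hb₂ε : b₂ * v - b₂ * u ≤ (|b₂| + 1) * ε := by
      have e : b₂ * v - b₂ * u = b₂ * ε := by rw [hudef, hvdef]; ring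
      have f1 : b₂ * ε ≤ |b₂| * ε := mul_le_mul_of_nonneg_right (le_abs_self b₂) hε.le
      have f2 : |b₂| * ε ≤ (|b₂| + 1) * ε := mul_le_mul_of_nonneg_right (by linarith) hε.le
      linarith only [e, f1, f2]
    rw [hSudef, hSvdef]
    linarith only [h1, h2, h3, hstep, hb₂ε]
  -- define b₀ b₁
  set b₀ : ℝ := u * v * (Su - Sv) / (2 * ε) with hb₀def
  have hb₀neg : b₀ < 0 := by
    rw [hb₀def]
    apply div_neg_of_neg_of_pos (mul_neg_of_pos_of_neg (mul_pos hu0 hv0) (sub_neg.2 hSuv))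
      (by linarith)
  set b₁ : ℝ := ((Su - b₀ / u) + (Sv - b₀ / v)) / 2 with hb₁def
  clear_value w₀ d c₁ e₃ ε u v Ju Jv Su Sv b₀ b₁
  have hvu : v - u = ε := by rw [hudef, hvdef]; ring
  have hgap : (Sv - b₀ / v) - (Su - b₀ / u) = (Sv - Su) / 2 := by
    have hbu : b₀ / u = v * (Su - Sv) / (2 * ε) := by
      rw [hb₀def]; field_simp
    have hbv : b₀ / v = u * (Su - Sv) / (2 * ε) := by
      rw [hb₀def]; field_simp
    have e : (Sv - b₀ / v) - (Su - b₀ / u) = (Sv - Su) + (v - u) * (Su - Sv) / (2 * ε) := by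
      rw [hbu, hbv]; ring
    rw [e, hvu]
    field_simp
    ring
  have hb1l : Su - b₀ / u < b₁ := by rw [hb₁def]; linarith only [hgap, hSuv]
  have hb1r : b₁ < Sv - b₀ / v := by rw [hb₁def]; linarith only [hgap, hSuv]
  -- the function D
  set D : ℝ → ℝ := fun x => x * ((a₁ - x) * (a₂ - x) * Jfun m x) - b₂ * x ^ 2 - b₁ * x - b₀
    with hDdef
  have hD0 : 0 < D 0 := by
    simp only [hDdef]
    simp
    linarith only [hb₀neg]
  have hDu : D u < 0 := by
    simp only [hDdef]
    have h1 : Su - b₁ < b₀ / u := by linarith only [hb1l]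
    have h2 : u * (Su - b₁) < b₀ := by
      rw [lt_div_iff₀ hu0] at h1
      linarith only [h1]
    rw [← hJudef]
    have e : u * ((a₁ - u) * (a₂ - u) * Ju) - b₂ * u ^ 2 - b₁ * u - b₀
        = u * (Su - b₁) - b₀ := by rw [hSudef]; ring
    rw [e]
    linarith only [h2]
  have hDv : 0 < D v := by
    simp only [hDdef]
    have h1 : b₀ / v < Sv - b₁ := by linarith only [hb1r]
    have h2 : b₀ < v * (Sv - b₁) := by
      rw [div_lt_iff₀ hv0] at h1
      linarith only [h1]
    rw [← hJvdef]
    have e : v * ((a₁ - v) * (a₂ - v) * Jv) - b₂ * v ^ 2 - b₁ * v - b₀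
        = v * (Sv - b₁) - b₀ := by rw [hSvdef]; ring
    rw [e]
    linarith only [h2]
  -- the far–left point t
  set A : ℝ := 8 * (|b₂| + |b₁| + |b₀| + 2) with hAdef
  have hA0 : 0 ≤ A := by rw [hAdef]; positivity
  obtain ⟨X, hX8, hXA⟩ := rho_int_big m hm A
  have hXpos : 0 < X := lt_of_lt_of_le (by positivity) hX8
  set t : ℝ := min (min (2 * a₁) (2 * a₂)) (min (-X) (-1)) - 1 with htdef
  have ht1 : t ≤ -2 := by
    have h1 := min_le_right (min (2 * a₁) (2 * a₂)) (min (-X) (-1))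
    have h2 := min_le_right (-X) (-1:ℝ)
    rw [htdef]; linarith
  have ht0 : t < 0 := by linarith
  have hta₁ : t < 2 * a₁ := by
    have h1 := min_le_left (min (2 * a₁) (2 * a₂)) (min (-X) (-1))
    have h2 := min_le_left (2 * a₁) (2 * a₂)
    rw [htdef]; linarith
  have hta₂ : t < 2 * a₂ := by
    have h1 := min_le_left (min (2 * a₁) (2 * a₂)) (min (-X) (-1))
    have h2 := min_le_right (2 * a₁) (2 * a₂)
    rw [htdef]; linarith
  have htX : t ≤ -X - 1 := by
    have h1 := min_le_right (min (2 * a₁) (2 * a₂)) (min (-X) (-1))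
    have h2 := min_le_left (-X) (-1:ℝ)
    rw [htdef]; linarith
  have hJt := J_lower m hm hX8 hXA ht0 hA0
  set Jt : ℝ := Jfun m t with hJtdef
  clear_value A t Jt
  have hm4 : (0:ℝ) < 4 * m ^ 2 := by positivity
  have hJt0 : 0 ≤ Jt := by
    rw [hJtdef]; exact J_nonneg m hm (by linarith only [ht0, hm4])
  have hJt2 : A / (-2 * t) ≤ Jt := by
    apply le_trans _ hJt
    have hXpos' : (0:ℝ) < X := hXpos
    apply div_le_div_of_nonneg_left hA0 (by linarith only [htX, ht0, hXpos'])
      (by linarith only [htX])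
  have hDt : D t < 0 := by
    simp only [hDdef]
    rw [← hJtdef]
    have hPt : t ^ 2 / 4 ≤ (a₁ - t) * (a₂ - t) := by
      have f1 : -t / 2 ≤ a₁ - t := by linarith only [hta₁]
      have f2 : -t / 2 ≤ a₂ - t := by linarith only [hta₂]
      have f3 : (0:ℝ) ≤ -t / 2 := by linarith only [ht0]
      have f4 : -t / 2 * (-t / 2) ≤ (a₁ - t) * (a₂ - t) :=
        mul_le_mul f1 f2 f3 (by linarith only [f1, f3])
      have f5 : t ^ 2 / 4 = -t / 2 * (-t / 2) := by ring
      rw [f5]; exact f4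
    have e1 : t * ((a₁ - t) * (a₂ - t) * Jt) ≤ t * (t ^ 2 / 4 * Jt) := by
      apply mul_le_mul_of_nonpos_left _ ht0.le
      exact mul_le_mul_of_nonneg_right hPt hJt0
    have e2 : t * (t ^ 2 / 4 * Jt) ≤ t * (t ^ 2 / 4 * (A / (-2 * t))) := by
      apply mul_le_mul_of_nonpos_left _ ht0.le
      exact mul_le_mul_of_nonneg_left hJt2 (by positivity)
    have e3 : t * (t ^ 2 / 4 * (A / (-2 * t))) = -(t ^ 2 * A) / 8 := by
      have htne : t ≠ 0 := ne_of_lt ht0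
      field_simp
      ring
    have habs₂ : -b₂ * t ^ 2 ≤ |b₂| * t ^ 2 :=
      mul_le_mul_of_nonneg_right (neg_le_abs b₂) (sq_nonneg t)
    have habs₁ : -b₁ * t ≤ |b₁| * t ^ 2 := aux_neg b₁ t (by linarith only [ht1])
    have habs₀ : -b₀ ≤ |b₀| * t ^ 2 := aux_const b₀ t (by linarith only [ht1])
    have ht2 : (1:ℝ) ≤ t ^ 2 := by linarith only [sq_nonneg (t + 1), ht1]
    have final : -(t ^ 2 * A) / 8 - b₂ * t ^ 2 - b₁ * t - b₀ < 0 := by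
      rw [hAdef]
      linarith only [habs₂, habs₁, habs₀, ht2]
    linarith only [e1, e2, e3 ▸ e2, final]
  -- continuity of D on [t, v]
  have hcont : ContinuousOn D (Icc t v) := by
    rw [hDdef]
    have hJc : ContinuousOn (Jfun m) (Icc t v) :=
      (J_contOn m hm hvlt).mono (fun x hx => hx.2)
    have hc1 : ContinuousOn (fun x : ℝ => x * ((a₁ - x) * (a₂ - x) * Jfun m x)) (Icc t v) :=
      continuousOn_id.mul (((continuousOn_const.sub continuousOn_id).mul
        (continuousOn_const.sub continuousOn_id)).mul hJc)
    exact ((hc1.sub (continuousOn_const.mul ((continuous_pow 2).continuousOn))).sub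
      (continuousOn_const.mul continuousOn_id)).sub continuousOn_const
  -- IVT three times
  have hw₁ : ∃ w₁ ∈ Ioo t (0:ℝ), D w₁ = 0 := by
    have h := intermediate_value_Ioo (le_of_lt ht0) (hcont.mono (Icc_subset_Icc le_rfl (by linarith only [hu0, huv])))
    have : (0:ℝ) ∈ Ioo (D t) (D 0) := ⟨hDt, hD0⟩
    obtain ⟨w, hw, hweq⟩ := h this
    exact ⟨w, hw, hweq⟩
  have hw₂ : ∃ w₂ ∈ Ioo (0:ℝ) u, D w₂ = 0 := by
    have h := intermediate_value_Ioo' (le_of_lt hu0) (hcont.mono (Icc_subset_Icc (by linarith only [ht0]) (by linarith only [huv])))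
    have : (0:ℝ) ∈ Ioo (D u) (D 0) := ⟨hDu, hD0⟩
    obtain ⟨w, hw, hweq⟩ := h this
    exact ⟨w, hw, hweq⟩
  have hw₃ : ∃ w₃ ∈ Ioo u v, D w₃ = 0 := by
    have h := intermediate_value_Ioo (le_of_lt huv) (hcont.mono (Icc_subset_Icc (by linarith only [ht0, hu0]) le_rfl))
    have : (0:ℝ) ∈ Ioo (D u) (D v) := ⟨hDu, hDv⟩
    obtain ⟨w, hw, hweq⟩ := h this
    exact ⟨w, hw, hweq⟩
  obtain ⟨w₁, ⟨hw₁l, hw₁r⟩, hw₁eq⟩ := hw₁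
  obtain ⟨w₂, ⟨hw₂l, hw₂r⟩, hw₂eq⟩ := hw₂
  obtain ⟨w₃, ⟨hw₃l, hw₃r⟩, hw₃eq⟩ := hw₃
  have solve : ∀ w : ℝ, w ≠ 0 → D w = 0 →
      (a₁ - w) * (a₂ - w) * Jfun m w = b₀ / w + b₁ + b₂ * w := by
    intro w hw hDw
    simp only [hDdef] at hDw
    have e : b₀ / w + b₁ + b₂ * w = (b₀ + b₁ * w + b₂ * w ^ 2) / w := by
      field_simp
    rw [e, eq_div_iff hw]
    linear_combination hDw
  refine ⟨b₀, b₁, ne_of_lt hb₀neg, w₁, w₂, w₃, ?_, ?_, ?_, ?_, ?_, ?_, ?_, ?_, ?_, ?_, ?_, ?_⟩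
  · exact ne_of_lt (by linarith only [hw₁r, hw₂l])
  · exact ne_of_lt (by linarith only [hw₁r, hw₂l, hw₂r, hw₃l])
  · exact ne_of_lt (by linarith only [hw₂r, hw₃l])
  · exact ne_of_lt hw₁r
  · exact ne_of_gt hw₂l
  · exact ne_of_gt (by linarith only [hw₂l, hw₂r, hw₃l])
  · linarith only [hw₁r, hm4]
  · linarith only [hw₂r, hult]
  · linarith only [hw₃r, hvlt]
  · exact solve w₁ (ne_of_lt hw₁r) hw₁eq
  · exact solve w₂ (ne_of_gt hw₂l) hw₂eq
  · exact solve w₃ (ne_of_gt (by linarith)) hw₃eq
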